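/- Let M, N be closed subsets of ℝⁿ, f : M → N a surjection with d(f(x), f(y)) < ε ⟺ d(x, y) < ε, and suppose both M and N satisfy the ε-separation property. If (x_k) is a sequence in M converging to x ∈ M, then for every δ > 0 there exists an integer s and elements v₁, …, v_s ∈ M with d(x, v_j) > ε such that the closed ball K = cl(B'(f(x), ε)) in N is covered by (K ∩ B'(f(x), δ)) ∪ ⋃_{j=1}^s (K ∩ B'(f(v_j), ε)). -/

import Mathlib

theorem finite_subcover_step {n : ℕ}
    (M N : Set (EuclideanSpace ℝ (Fin n)))
    (hM : IsClosed M) (hN : IsClosed N)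
    (f : EuclideanSpace ℝ (Fin n) → EuclideanSpace ℝ (Fin n))
    (hmaps : Set.MapsTo f M N) (hsurj : Set.SurjOn f M N)
    (ε : ℝ) (hε : 0 < ε)
    (hiff : ∀ x ∈ M, ∀ y ∈ M, dist (f x) (f y) < ε ↔ dist x y < ε)
    (hsepM : ∀ x ∈ M, ∀ y ∈ M, x ≠ y → ∃ z ∈ M, dist x z > ε ∧ dist y z < ε)
    (hsepN : ∀ u ∈ N, ∀ v ∈ N, u ≠ v → ∃ w ∈ N, dist u w > ε ∧ dist v w < ε)
    (x : EuclideanSpace ℝ (Fin n)) (hx : x ∈ M)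
    (xs : ℕ → EuclideanSpace ℝ (Fin n)) (hxs : ∀ k, xs k ∈ M)
    (hlim : Filter.Tendsto xs Filter.atTop (nhds x)) :
    ∀ δ > 0, ∃ (s : ℕ) (v : Fin s → EuclideanSpace ℝ (Fin n)),
      (∀ j, v j ∈ M ∧ dist x (v j) > ε) ∧
      closure (Metric.ball (f x) ε ∩ N) ⊆
        (closure (Metric.ball (f x) ε ∩ N) ∩ Metric.ball (f x) δ) ∪
        ⋃ j, (closure (Metric.ball (f x) ε ∩ N) ∩ Metric.ball (f (v j)) ε) := by
  intro δ hδ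
  set K := closure (Metric.ball (f x) ε ∩ N) with hK
  -- K is compact
  have hKcpt : IsCompact K := by
    apply Metric.isCompact_of_isClosed_isBounded isClosed_closure
    exact (Metric.isBounded_ball.subset Set.inter_subset_left).closure
  have hKN : K ⊆ N := hN.closure_subset_iff.mpr Set.inter_subset_right
  -- the compact part outside the δ-ball
  have hCcpt : IsCompact (K \ Metric.ball (f x) δ) := hKcpt.diff Metric.isOpen_ball
  set S : Set (EuclideanSpace ℝ (Fin n)) := {v | v ∈ M ∧ dist x v > ε} with hS
  have hcov : K \ Metric.ball (f x) δ ⊆ ⋃ v ∈ S, Metric.ball (f v) ε := by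
    rintro u ⟨huK, hu⟩
    have huN : u ∈ N := hKN huK
    obtain ⟨p, hpM, hpu⟩ := hsurj huN
    have hpx : p ≠ x := by
      rintro rfl
      apply hu
      rw [hpu]
      exact Metric.mem_ball_self hδ
    obtain ⟨z, hzM, hxz, hpz⟩ := hsepM x hx p hpM (Ne.symm hpx)
    have : dist (f p) (f z) < ε := (hiff p hpM z hzM).mpr hpz
    refine Set.mem_biUnion (show z ∈ S from ⟨hzM, hxz⟩) ?_
    rw [Metric.mem_ball, ← hpu]
    exact this
  obtain ⟨b', hb'S, hb'fin, hb'cov⟩ := hCcpt.elim_finite_subcover_image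
    (fun v _ => Metric.isOpen_ball) hcov
  classical
  refine ⟨hb'fin.toFinset.toList.length, fun j => hb'fin.toFinset.toList.get j, ?_, ?_⟩
  · intro j
    have h' : hb'fin.toFinset.toList.get j ∈ hb'fin.toFinset.toList :=
      List.get_mem _ j
    have : hb'fin.toFinset.toList.get j ∈ b' :=
      (Set.Finite.mem_toFinset _).mp (Finset.mem_toList.mp h')
    exact (hb'S this : _)
  · intro u huK
    by_cases hud : u ∈ Metric.ball (f x) δ
    · exact Or.inl ⟨huK, hud⟩
    · have := hb'cov ⟨huK, hud⟩
      obtain ⟨v, hvb', huv⟩ := Set.mem_iUnion₂.mp this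
      have hvL : v ∈ hb'fin.toFinset.toList :=
        Finset.mem_toList.mpr ((Set.Finite.mem_toFinset _).mpr hvb')
      obtain ⟨j, hj⟩ := List.mem_iff_get.mp hvL
      refine Or.inr (Set.mem_iUnion.mpr ⟨j, huK, ?_⟩)
      show u ∈ Metric.ball (f (hb'fin.toFinset.toList.get j)) ε
      rwa [hj]
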